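/- Let G0 and G1 be two order-k de Bruijn graphs with colexicographically sorted node k-mers. Define Z_1 as in equation (8): the bit string 01 followed, for each symbol c in increasing order, by ℓ0(c) zeros and ℓ1(c) ones, where ℓb(c) counts nodes of Gb whose k-mer ends in c. Then Z_1 satisfies Property 1 for h=1: the i-th 0 precedes the j-th 1 in Z_1 if and only if the reversed k-mer of the i-th node of G0, restricted to its first symbol, is lexicographically ≤ the reversed k-mer of the j-th node of G1 restricted to its first symbol. -/

import Mathlib

/-- Positions (0-based) of the occurrences of bit `b` in a list of booleans. -/
def occPos (l : List Bool) (b : Bool) : List ℕ :=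
  (List.range l.length).filter (fun p => l.getD p (!b) == b)

set_option linter.unusedSectionVars false

theorem occPos_nil (b : Bool) : occPos [] b = [] := rfl

theorem occPos_cons (x : Bool) (l : List Bool) (b : Bool) :
    occPos (x :: l) b =
      (if x = b then [0] else []) ++ (occPos l b).map (· + 1) := by
  unfold occPos
  rw [List.length_cons, List.range_succ_eq_map, List.filter_cons]
  simp only [List.getD_cons_zero, List.filter_map]
  have h1 : ((fun p => (x :: l).getD p (!b) == b) ∘ Nat.succ) =
      (fun p => l.getD p (!b) == b) := by
    funext p; simp [List.getD_cons_succ]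
  rw [h1]
  have h2 : List.map Nat.succ (List.filter (fun p => l.getD p (!b) == b) (List.range l.length))
      = List.map (· + 1) (List.filter (fun p => l.getD p (!b) == b) (List.range l.length)) := by
    apply List.map_congr_left; intro a _; omega
  rw [h2]
  by_cases hx : x = b <;> simp [hx]

theorem occPos_append (l₁ l₂ : List Bool) (b : Bool) :
    occPos (l₁ ++ l₂) b = occPos l₁ b ++ (occPos l₂ b).map (· + l₁.length) := by
  induction l₁ with
  | nil => simp [occPos_nil]
  | cons x l ih =>
    rw [List.cons_append, occPos_cons, occPos_cons, ih]
    simp only [List.map_append, List.map_map, List.append_assoc, List.length_cons]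
    have : ((fun x => x + 1) ∘ fun x => x + l.length) = (fun x : ℕ => x + (l.length + 1)) := by
      funext a; simp; omega
    rw [this]

theorem length_occPos (l : List Bool) (b : Bool) : (occPos l b).length = l.count b := by
  induction l with
  | nil => rfl
  | cons x l ih =>
    rw [occPos_cons, List.count_cons]
    by_cases hx : x = b <;> simp [hx, ih, beq_iff_eq]

theorem occPos_replicate_self (n : ℕ) (b : Bool) :
    occPos (List.replicate n b) b = List.range n := by
  unfold occPos
  rw [List.length_replicate]
  apply List.filter_eq_self.mpr
  intro p hp
  rw [List.mem_range] at hp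
  simp [List.getD_eq_getElem?_getD, List.getElem?_replicate, hp]

theorem occPos_replicate_ne (n : ℕ) (b : Bool) :
    occPos (List.replicate n b) (!b) = [] := by
  unfold occPos
  rw [List.length_replicate]
  apply List.filter_eq_nil_iff.mpr
  intro p hp
  rw [List.mem_range] at hp
  simp [List.getD_eq_getElem?_getD, List.getElem?_replicate, hp]

theorem getD_map_add (l : List ℕ) (m n : ℕ) (hn : n < l.length) :
    (l.map (· + m)).getD n 0 = l.getD n 0 + m := by
  rw [List.getD_eq_getElem?_getD, List.getD_eq_getElem?_getD, List.getElem?_map,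
    List.getElem?_eq_getElem hn]
  rfl

theorem getD_range (m n : ℕ) (hn : n < m) : (List.range m).getD n 0 = n := by
  rw [List.getD_eq_getElem?_getD, List.getElem?_range hn]; rfl

section Blocks
variable {A : Type} (l0 l1 : A → ℕ)

def blocksB : List A → List Bool
  | [] => []
  | c :: cs => (List.replicate (l0 c) false ++ List.replicate (l1 c) true) ++ blocksB cs

def Qrel : List A → ℕ → ℕ → Prop
  | [], _, _ => False
  | c :: cs, i, j => if i < l0 c then True else if j < l1 c then False
      else Qrel cs (i - l0 c) (j - l1 c)

theorem blocksB_eq : ∀ cs : List A,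
    cs.flatMap (fun c => List.replicate (l0 c) false ++ List.replicate (l1 c) true) =
      blocksB l0 l1 cs
  | [] => rfl
  | c :: cs => by rw [List.flatMap_cons, blocksB, blocksB_eq cs]

theorem count_blocksB_false : ∀ cs : List A,
    (blocksB l0 l1 cs).count false = (cs.map l0).sum
  | [] => rfl
  | c :: cs => by
    rw [blocksB, List.count_append, List.count_append, count_blocksB_false cs]
    simp [List.count_replicate]

theorem count_blocksB_true : ∀ cs : List A,
    (blocksB l0 l1 cs).count true = (cs.map l1).sum
  | [] => rfl
  | c :: cs => by
    rw [blocksB, List.count_append, List.count_append, count_blocksB_true cs]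
    simp [List.count_replicate]

theorem occPos_blocksB_false (c : A) (cs : List A) :
    occPos (blocksB l0 l1 (c :: cs)) false =
      List.range (l0 c) ++ (occPos (blocksB l0 l1 cs) false).map (· + (l0 c + l1 c)) := by
  rw [blocksB, occPos_append, occPos_append, occPos_replicate_self]
  have h : occPos (List.replicate (l1 c) true) false = [] := by
    have := occPos_replicate_ne (l1 c) true; simpa using this
  simp [h]

theorem occPos_blocksB_true (c : A) (cs : List A) :
    occPos (blocksB l0 l1 (c :: cs)) true =
      (List.range (l1 c)).map (· + l0 c) ++
        (occPos (blocksB l0 l1 cs) true).map (· + (l0 c + l1 c)) := by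
  rw [blocksB, occPos_append, occPos_append, occPos_replicate_self]
  have h : occPos (List.replicate (l0 c) false) true = [] := by
    have := occPos_replicate_ne (l0 c) false; simpa using this
  simp [h]

theorem KB : ∀ (cs : List A) (i j : ℕ),
    i < (blocksB l0 l1 cs).count false → j < (blocksB l0 l1 cs).count true →
    ((occPos (blocksB l0 l1 cs) false).getD i 0 < (occPos (blocksB l0 l1 cs) true).getD j 0 ↔
      Qrel l0 l1 cs i j)
  | [], i, j => by intro hi _; exact absurd hi (by simp [blocksB, occPos_nil])
  | c :: cs, i, j => by
    intro hi hj
    have hi' : i < l0 c + (blocksB l0 l1 cs).count false := by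
      have := count_blocksB_false (l0 := l0) (l1 := l1) (c :: cs)
      have h2 := count_blocksB_false (l0 := l0) (l1 := l1) cs
      simp only [List.map_cons, List.sum_cons] at this
      omega
    have hj' : j < l1 c + (blocksB l0 l1 cs).count true := by
      have := count_blocksB_true (l0 := l0) (l1 := l1) (c :: cs)
      have h2 := count_blocksB_true (l0 := l0) (l1 := l1) cs
      simp only [List.map_cons, List.sum_cons] at this
      omega
    rw [occPos_blocksB_false, occPos_blocksB_true, Qrel]
    have lenf : (occPos (blocksB l0 l1 cs) false).length = (blocksB l0 l1 cs).count false :=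
      length_occPos _ _
    have lent : (occPos (blocksB l0 l1 cs) true).length = (blocksB l0 l1 cs).count true :=
      length_occPos _ _
    by_cases hic : i < l0 c
    · rw [List.getD_append _ _ _ _ (by simpa using hic), getD_range _ _ hic, if_pos hic]
      simp only [iff_true]
      by_cases hjc : j < l1 c
      · rw [List.getD_append _ _ _ _ (by simpa using hjc), getD_map_add _ _ _ (by simpa using hjc),
          getD_range _ _ hjc]
        omega
      · rw [List.getD_append_right _ _ _ _ (by simpa using hjc)]
        rw [List.length_map, List.length_range]
        rw [getD_map_add _ _ _ (by omega)]
        omega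
    · rw [if_neg hic]
      rw [List.getD_append_right _ _ _ _ (by simpa using hic), List.length_range]
      rw [getD_map_add _ _ _ (by omega)]
      by_cases hjc : j < l1 c
      · rw [if_pos hjc, List.getD_append _ _ _ _ (by simpa using hjc),
          getD_map_add _ _ _ (by simpa using hjc), getD_range _ _ hjc]
        simp only [iff_false]
        omega
      · rw [if_neg hjc, List.getD_append_right _ _ _ _ (by simpa using hjc)]
        rw [List.length_map, List.length_range]
        rw [getD_map_add _ _ _ (by omega)]
        rw [Nat.add_lt_add_iff_right]
        exact KB cs (i - l0 c) (j - l1 c) (by omega) (by omega)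

end Blocks

section QL
variable {A : Type} [LinearOrder A] (l0 l1 : A → ℕ)

def Asum (lc : A → ℕ) (a : A) (cs : List A) : ℕ :=
  ((cs.filter (fun c => decide (c < a))).map lc).sum

theorem Asum_cons (lc : A → ℕ) (a c : A) (cs : List A) :
    Asum lc a (c :: cs) = (if c < a then lc c else 0) + Asum lc a cs := by
  unfold Asum
  rw [List.filter_cons]
  by_cases h : c < a <;> simp [h]

theorem Asum_eq_zero (lc : A → ℕ) (a : A) (cs : List A) (h : ∀ x ∈ cs, ¬ x < a) :
    Asum lc a cs = 0 := by
  unfold Asum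
  rw [List.filter_eq_nil_iff.mpr (by intro x hx; simpa using h x hx)]
  rfl

theorem QL : ∀ (cs : List A), cs.Pairwise (· < ·) → ∀ (a b : A) (i j : ℕ),
    a ∈ cs → b ∈ cs →
    Asum l0 a cs ≤ i → i < Asum l0 a cs + l0 a →
    Asum l1 b cs ≤ j → j < Asum l1 b cs + l1 b →
    (Qrel l0 l1 cs i j ↔ a ≤ b)
  | [], _, a, b, i, j => by intro ha; exact absurd ha List.not_mem_nil
  | c :: cs, hs, a, b, i, j => by
    intro ha hb hi1 hi2 hj1 hj2
    rw [List.pairwise_cons] at hs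
    obtain ⟨hcall, hs'⟩ := hs
    rw [Qrel]
    by_cases hac : a = c
    · subst hac
      have hA : Asum l0 a (a :: cs) = 0 := by
        apply Asum_eq_zero
        intro x hx
        rcases List.mem_cons.mp hx with h | h
        · subst h; exact lt_irrefl _
        · exact not_lt_of_ge (le_of_lt (hcall x h))
      rw [hA] at hi2
      rw [if_pos (by omega)]
      simp only [true_iff]
      rcases List.mem_cons.mp hb with h | h
      · exact le_of_eq h.symm
      · exact le_of_lt (hcall b h)
    · have ha' : a ∈ cs := by
        rcases List.mem_cons.mp ha with h | h
        · exact absurd h hac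
        · exact h
      have hca : c < a := hcall a ha'
      rw [Asum_cons, if_pos hca] at hi1 hi2
      rw [if_neg (by omega)]
      by_cases hbc : b = c
      · subst hbc
        have hB : Asum l1 b (b :: cs) = 0 := by
          apply Asum_eq_zero
          intro x hx
          rcases List.mem_cons.mp hx with h | h
          · subst h; exact lt_irrefl _
          · exact not_lt_of_ge (le_of_lt (hcall x h))
        rw [hB] at hj2
        rw [if_pos (by omega)]
        simp only [false_iff, not_le]
        exact hca
      · have hb' : b ∈ cs := by
          rcases List.mem_cons.mp hb with h | h
          · exact absurd h hbc
          · exact h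
        have hcb : c < b := hcall b hb'
        rw [Asum_cons, if_pos hcb] at hj1 hj2
        rw [if_neg (by omega)]
        exact QL cs hs' a b (i - l0 c) (j - l1 c) ha' hb'
          (by omega) (by omega) (by omega) (by omega)

end QL

section Count
variable {A : Type} [LinearOrder A] [DecidableEq A]

theorem sum_filter_card {n : ℕ} (f : Fin n → A) (lc : A → ℕ)
    (hlc : ∀ c, lc c = (Finset.univ.filter (fun i => f i = c)).card)
    (s : Finset A) (L : List A) (hnd : L.Nodup) (hmem : ∀ c, c ∈ L ↔ c ∈ s) :
    ((L.map lc).sum) = (Finset.univ.filter (fun i => f i ∈ s)).card := by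
  have htf : L.toFinset = s := by
    ext c; rw [List.mem_toFinset, hmem]
  rw [← List.sum_toFinset lc hnd, htf]
  rw [Finset.card_eq_sum_card_fiberwise (f := f) (t := s)
    (by intro x hx; exact (Finset.mem_filter.mp hx).2)]
  apply Finset.sum_congr rfl
  intro b hb
  rw [hlc b]
  congr 1
  ext x
  simp only [Finset.mem_filter, Finset.mem_univ, true_and]
  constructor
  · intro h; exact ⟨h ▸ hb, h⟩
  · rintro ⟨_, h⟩; exact h

theorem sandwich {n : ℕ} (f : Fin n → A) (dollar : A)
    (hmono : ∀ i i' : Fin n, i < i' → f i ≤ f i')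
    (hd0 : ∀ i : Fin n, f i = dollar ↔ i.val = 0) (i : Fin n) (hi : 0 < i.val) :
    (Finset.univ.filter (fun i' => f i' ≠ dollar ∧ f i' < f i)).card ≤ i.val - 1 ∧
    i.val ≤ (Finset.univ.filter (fun i' => f i' ≠ dollar ∧ f i' < f i)).card +
      (Finset.univ.filter (fun i' => f i' = f i)).card := by
  constructor
  · have := Finset.card_le_card_of_injOn (fun i' : Fin n => i'.val)
      (s := Finset.univ.filter (fun i' => f i' ≠ dollar ∧ f i' < f i))
      (t := Finset.Ico 1 i.val) ?_ ?_
    · simpa using this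
    · intro x hx
      rw [Finset.mem_coe, Finset.mem_filter] at hx
      obtain ⟨-, hxd, hxlt⟩ := hx
      rw [Finset.mem_coe, Finset.mem_Ico]
      constructor
      · show 1 ≤ x.val
        have : x.val ≠ 0 := fun h => hxd ((hd0 x).mpr h)
        omega
      · show x.val < i.val
        by_contra hcon
        push_neg at hcon
        have : i ≤ x := by rw [Fin.le_def]; omega
        rcases eq_or_lt_of_le this with h | h
        · exact absurd (h ▸ hxlt) (lt_irrefl _)
        · exact absurd hxlt (not_lt_of_ge (hmono i x h))
    · intro x _ y _ h
      exact Fin.val_injective h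
  · have hdisj : Disjoint (Finset.univ.filter (fun i' => f i' ≠ dollar ∧ f i' < f i))
        (Finset.univ.filter (fun i' => f i' = f i)) := by
      rw [Finset.disjoint_filter]
      rintro x _ ⟨_, hlt⟩ heq
      exact absurd (heq ▸ hlt) (lt_irrefl _)
    rw [← Finset.card_union_of_disjoint hdisj]
    have := Finset.card_le_card_of_injOn
      (fun m : ℕ => (⟨min m i.val, lt_of_le_of_lt (min_le_right _ _) i.isLt⟩ : Fin n))
      (s := Finset.Icc 1 i.val)
      (t := (Finset.univ.filter (fun i' => f i' ≠ dollar ∧ f i' < f i)) ∪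
        (Finset.univ.filter (fun i' => f i' = f i))) ?_ ?_
    · have hc : (Finset.Icc 1 i.val).card = i.val := by
        rw [Nat.card_Icc]; omega
      rw [hc] at this; exact this
    · intro m hm
      rw [Finset.mem_coe, Finset.mem_Icc] at hm
      obtain ⟨hm1, hm2⟩ := hm
      set x : Fin n := ⟨min m i.val, lt_of_le_of_lt (min_le_right _ _) i.isLt⟩ with hxdef
      have hxv : x.val = m := by simp [hxdef]; omega
      have hxle : x ≤ i := by
        rw [Fin.le_def]; omega
      have hfle : f x ≤ f i := by
        rcases eq_or_lt_of_le hxle with h | h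
        · exact le_of_eq (congrArg f h)
        · exact hmono x i h
      rw [Finset.mem_coe, Finset.mem_union, Finset.mem_filter, Finset.mem_filter]
      rcases eq_or_lt_of_le hfle with h | h
      · exact Or.inr ⟨Finset.mem_univ _, h⟩
      · refine Or.inl ⟨Finset.mem_univ _, ?_, h⟩
        intro hcon
        have : x.val = 0 := (hd0 x).mp hcon
        omega
    · intro x hx y hy h
      rw [Finset.mem_coe, Finset.mem_Icc] at hx hy
      have := congrArg Fin.val h
      simp only at this
      omega

theorem lex_single_iff (a b : A) :
    (List.Lex (· < ·) [a] [b] ∨ ([a] : List A) = [b]) ↔ a ≤ b := by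
  constructor
  · rintro (h | h)
    · cases h with
      | rel h => exact le_of_lt h
      | cons h => cases h
    · rw [List.cons.injEq] at h
      exact le_of_eq h.1
  · intro h
    rcases lt_or_eq_of_le h with h | h
    · exact Or.inl (List.Lex.rel h)
    · exact Or.inr (by rw [h])

theorem lex_head_le {a b : A} {l1 l2 : List A}
    (h : List.Lex (· < ·) (a :: l1) (b :: l2)) : a ≤ b := by
  cases h with
  | rel h => exact le_of_lt h
  | cons _ => exact le_rfl

end Count

/-- The bitvector `Z_1 = 01 · 0^{ℓ0(1)}1^{ℓ1(1)} ⋯ 0^{ℓ0(σ)}1^{ℓ1(σ)}`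
(symbols of the alphabet different from the sentinel taken in increasing order,
`ℓb(c)` = number of nodes of `G_b` whose k-mer ends with `c`, i.e. whose
reversed k-mer starts with `c`) satisfies Property 1 for `h = 1`:
the `i`-th 0 precedes the `j`-th 1 iff the length-1 prefix of the reversed
k-mer of `v_i` is lexicographically ≤ that of `w_j`. -/
theorem stmt_3 {A : Type} [LinearOrder A] [Fintype A] [DecidableEq A]
    (k n0 n1 : ℕ) (dollar : A)
    (hdollar : ∀ a : A, a ≠ dollar → dollar < a)
    (v : Fin n0 → List A) (w : Fin n1 → List A)
    (hlv : ∀ i, (v i).length = k) (hlw : ∀ j, (w j).length = k)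
    (hsv : ∀ i i' : Fin n0, i < i' → List.Lex (· < ·) (v i).reverse (v i').reverse)
    (hsw : ∀ j j' : Fin n1, j < j' → List.Lex (· < ·) (w j).reverse (w j').reverse)
    (hv0 : ∀ h0 : 0 < n0, v ⟨0, h0⟩ = List.replicate k dollar)
    (hw0 : ∀ h1 : 0 < n1, w ⟨0, h1⟩ = List.replicate k dollar)
    (hvno : ∀ i : Fin n0, (0:ℕ) < i.val → (v i).reverse.take 1 ≠ [dollar])
    (hwno : ∀ j : Fin n1, (0:ℕ) < j.val → (w j).reverse.take 1 ≠ [dollar])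
    (l0 l1 : A → ℕ)
    (hl0 : ∀ c, l0 c =
      (Finset.univ.filter (fun i : Fin n0 => (v i).reverse.take 1 = [c])).card)
    (hl1 : ∀ c, l1 c =
      (Finset.univ.filter (fun j : Fin n1 => (w j).reverse.take 1 = [c])).card)
    (Z1 : List Bool)
    (hZ1 : Z1 = [false, true] ++
      (Finset.sort (Finset.univ.erase dollar : Finset A) (· ≤ ·)).flatMap
        (fun c => List.replicate (l0 c) false ++ List.replicate (l1 c) true)) :
    ∀ (i : Fin n0) (j : Fin n1),
      (occPos Z1 false).getD i.val 0 < (occPos Z1 true).getD j.val 0 ↔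
        (List.Lex (· < ·) ((v i).reverse.take 1) ((w j).reverse.take 1) ∨
          (v i).reverse.take 1 = (w j).reverse.take 1) := by
  intro i j
  by_cases hk : k = 0
  · -- degenerate case k = 0
    have hvnil : ∀ i' : Fin n0, v i' = [] := by
      intro i'; have := hlv i'; rw [hk] at this; exact List.length_eq_zero_iff.mp this
    have hwnil : ∀ j' : Fin n1, w j' = [] := by
      intro j'; have := hlw j'; rw [hk] at this; exact List.length_eq_zero_iff.mp this
    have hn0 : n0 = 1 := by
      by_contra h
      have h2 : 2 ≤ n0 := by have := i.isLt; omega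
      have hlt : (⟨0, by omega⟩ : Fin n0) < ⟨1, by omega⟩ := by
        exact Fin.mk_lt_mk.mpr (by omega)
      have lex := hsv ⟨0, by omega⟩ ⟨1, by omega⟩ hlt
      rw [hvnil, hvnil] at lex
      simp only [List.reverse_nil] at lex
      cases lex
    have hn1 : n1 = 1 := by
      by_contra h
      have h2 : 2 ≤ n1 := by have := j.isLt; omega
      have hlt : (⟨0, by omega⟩ : Fin n1) < ⟨1, by omega⟩ := by
        exact Fin.mk_lt_mk.mpr (by omega)
      have lex := hsw ⟨0, by omega⟩ ⟨1, by omega⟩ hlt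
      rw [hwnil, hwnil] at lex
      simp only [List.reverse_nil] at lex
      cases lex
    have hl0z : ∀ c, l0 c = 0 := by
      intro c; rw [hl0]; apply Finset.card_eq_zero.mpr
      apply Finset.filter_eq_empty_iff.mpr
      intro x _; rw [hvnil x]; simp
    have hl1z : ∀ c, l1 c = 0 := by
      intro c; rw [hl1]; apply Finset.card_eq_zero.mpr
      apply Finset.filter_eq_empty_iff.mpr
      intro x _; rw [hwnil x]; simp
    have hZ : Z1 = [false, true] := by
      rw [hZ1]; simp [hl0z, hl1z]
    have hi0 : i.val = 0 := by have := i.isLt; omega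
    have hj0 : j.val = 0 := by have := j.isLt; omega
    rw [hZ, hi0, hj0]
    have e1 : occPos [false, true] false = [0] := by decide
    have e2 : occPos [false, true] true = [1] := by decide
    rw [e1, e2]
    apply iff_of_true
    · norm_num
    · right; rw [hvnil, hwnil]
  · have hk1 : 1 ≤ k := by omega
    haveI : Inhabited A := ⟨dollar⟩
    have htake : ∀ (L : List A), L.length = k → L.take 1 = [L.headI] := by
      intro L hL
      cases L with
      | nil => simp at hL; omega
      | cons x xs => rfl
    set f : Fin n0 → A := fun i' => (v i').reverse.headI with hfd
    set g : Fin n1 → A := fun j' => (w j').reverse.headI with hgd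
    have hlenr : ∀ i' : Fin n0, (v i').reverse.length = k := by
      intro i'; rw [List.length_reverse, hlv]
    have hlenr' : ∀ j' : Fin n1, (w j').reverse.length = k := by
      intro j'; rw [List.length_reverse, hlw]
    have htv : ∀ i' : Fin n0, (v i').reverse.take 1 = [f i'] := by
      intro i'; simp only [hfd]; exact htake _ (hlenr i')
    have htw : ∀ j' : Fin n1, (w j').reverse.take 1 = [g j'] := by
      intro j'; simp only [hgd]; exact htake _ (hlenr' j')
    have hfmono : ∀ a b : Fin n0, a < b → f a ≤ f b := by
      intro a b hab
      have lex := hsv a b hab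
      rcases hva : (v a).reverse with _ | ⟨x, xs⟩
      · exfalso
        have h := hlenr a
        rw [hva] at h
        have h0 : (0:ℕ) = k := h
        omega
      · rcases hvb : (v b).reverse with _ | ⟨y, ys⟩
        · exfalso
          have h := hlenr b
          rw [hvb] at h
          have h0 : (0:ℕ) = k := h
          omega
        · rw [hva, hvb] at lex
          have h1 : f a = x := by simp only [hfd]; rw [hva]; rfl
          have h2 : f b = y := by simp only [hfd]; rw [hvb]; rfl
          rw [h1, h2]
          exact lex_head_le lex
    have hgmono : ∀ a b : Fin n1, a < b → g a ≤ g b := by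
      intro a b hab
      have lex := hsw a b hab
      rcases hva : (w a).reverse with _ | ⟨x, xs⟩
      · exfalso
        have h := hlenr' a
        rw [hva] at h
        have h0 : (0:ℕ) = k := h
        omega
      · rcases hvb : (w b).reverse with _ | ⟨y, ys⟩
        · exfalso
          have h := hlenr' b
          rw [hvb] at h
          have h0 : (0:ℕ) = k := h
          omega
        · rw [hva, hvb] at lex
          have h1 : g a = x := by simp only [hgd]; rw [hva]; rfl
          have h2 : g b = y := by simp only [hgd]; rw [hvb]; rfl
          rw [h1, h2]
          exact lex_head_le lex
    have hf0 : ∀ i' : Fin n0, f i' = dollar ↔ i'.val = 0 := by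
      intro i'
      constructor
      · intro h
        by_contra hne
        apply hvno i' (by omega)
        rw [htv i', h]
      · intro h
        have hveq : v i' = List.replicate k dollar := by
          have hx : i' = ⟨0, i'.pos⟩ := Fin.ext h
          rw [hx]; exact hv0 i'.pos
        simp only [hfd]
        rw [hveq, List.reverse_replicate]
        cases k with
        | zero => omega
        | succ m => rw [List.replicate_succ]; rfl
    have hg0 : ∀ j' : Fin n1, g j' = dollar ↔ j'.val = 0 := by
      intro j'
      constructor
      · intro h
        by_contra hne
        apply hwno j' (by omega)
        rw [htw j', h]
      · intro h
        have hweq : w j' = List.replicate k dollar := by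
          have hx : j' = ⟨0, j'.pos⟩ := Fin.ext h
          rw [hx]; exact hw0 j'.pos
        simp only [hgd]
        rw [hweq, List.reverse_replicate]
        cases k with
        | zero => omega
        | succ m => rw [List.replicate_succ]; rfl
    have hl0' : ∀ c, l0 c = (Finset.univ.filter (fun i' : Fin n0 => f i' = c)).card := by
      intro c; rw [hl0]; congr 1
      apply Finset.filter_congr
      intro x _
      rw [htv x]
      simp
    have hl1' : ∀ c, l1 c = (Finset.univ.filter (fun j' : Fin n1 => g j' = c)).card := by
      intro c; rw [hl1]; congr 1
      apply Finset.filter_congr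
      intro x _
      rw [htw x]
      simp
    set csl := Finset.sort (Finset.univ.erase dollar : Finset A) (· ≤ ·) with hcsl
    have hcs_sorted : csl.Pairwise (· < ·) := (Finset.sortedLT_sort _).pairwise
    have hcs_nd : csl.Nodup := Finset.sort_nodup _ _
    have hcs_mem : ∀ c, c ∈ csl ↔ c ≠ dollar := by
      intro c; rw [hcsl, Finset.mem_sort, Finset.mem_erase]; simp
    have hZ : Z1 = [false, true] ++ blocksB l0 l1 csl := by
      rw [hZ1, blocksB_eq]
    have hcnt0 : (blocksB l0 l1 csl).count false = n0 - 1 := by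
      rw [count_blocksB_false]
      rw [sum_filter_card f l0 hl0' (Finset.univ.erase dollar) csl hcs_nd
        (fun c => by rw [hcsl, Finset.mem_sort])]
      have h1 : (Finset.univ.filter (fun i' : Fin n0 => f i' ∈ Finset.univ.erase dollar))
          = (Finset.univ.filter (fun i' : Fin n0 => ¬ i'.val = 0)) := by
        apply Finset.filter_congr
        intro x _
        rw [Finset.mem_erase]
        simp [hf0 x]
      rw [h1]
      have h2 : (Finset.univ.filter (fun i' : Fin n0 => i'.val = 0)).card +
          (Finset.univ.filter (fun i' : Fin n0 => ¬ i'.val = 0)).card = n0 := by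
        rw [Finset.card_filter_add_card_filter_not]; simp
      have h3 : (Finset.univ.filter (fun i' : Fin n0 => i'.val = 0)).card = 1 := by
        have : (Finset.univ.filter (fun i' : Fin n0 => i'.val = 0)) = {⟨0, i.pos⟩} := by
          ext x; simp [Fin.ext_iff]
        rw [this, Finset.card_singleton]
      omega
    have hcnt1 : (blocksB l0 l1 csl).count true = n1 - 1 := by
      rw [count_blocksB_true]
      rw [sum_filter_card g l1 hl1' (Finset.univ.erase dollar) csl hcs_nd
        (fun c => by rw [hcsl, Finset.mem_sort])]
      have h1 : (Finset.univ.filter (fun j' : Fin n1 => g j' ∈ Finset.univ.erase dollar))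
          = (Finset.univ.filter (fun j' : Fin n1 => ¬ j'.val = 0)) := by
        apply Finset.filter_congr
        intro x _
        rw [Finset.mem_erase]
        simp [hg0 x]
      rw [h1]
      have h2 : (Finset.univ.filter (fun j' : Fin n1 => j'.val = 0)).card +
          (Finset.univ.filter (fun j' : Fin n1 => ¬ j'.val = 0)).card = n1 := by
        rw [Finset.card_filter_add_card_filter_not]; simp
      have h3 : (Finset.univ.filter (fun j' : Fin n1 => j'.val = 0)).card = 1 := by
        have : (Finset.univ.filter (fun j' : Fin n1 => j'.val = 0)) = {⟨0, j.pos⟩} := by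
          ext x; simp [Fin.ext_iff]
        rw [this, Finset.card_singleton]
      omega
    have hlenf : (occPos (blocksB l0 l1 csl) false).length = n0 - 1 := by
      rw [length_occPos, hcnt0]
    have hlent : (occPos (blocksB l0 l1 csl) true).length = n1 - 1 := by
      rw [length_occPos, hcnt1]
    have hoccf : occPos Z1 false = [0] ++ (occPos (blocksB l0 l1 csl) false).map (· + 2) := by
      rw [hZ, occPos_append]
      have e1 : occPos [false, true] false = [0] := by decide
      rw [e1]
      norm_num
    have hocct : occPos Z1 true = [1] ++ (occPos (blocksB l0 l1 csl) true).map (· + 2) := by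
      rw [hZ, occPos_append]
      have e2 : occPos [false, true] true = [1] := by decide
      rw [e2]
      norm_num
    rw [htv i, htw j, lex_single_iff]
    rcases Nat.eq_zero_or_pos i.val with hi0 | hi0
    · apply iff_of_true
      · rw [hoccf, hocct, hi0]
        have hp0 : (([0] : List ℕ) ++
            (occPos (blocksB l0 l1 csl) false).map (· + 2)).getD 0 0 = 0 := rfl
        rw [hp0]
        rcases Nat.eq_zero_or_pos j.val with hj0 | hj0
        · rw [hj0, List.getD_append _ _ _ _ (by norm_num)]
          norm_num
        · rw [List.getD_append_right _ _ _ _ (by simp; omega)]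
          simp only [List.length_cons, List.length_nil]
          rw [getD_map_add _ _ _ (by rw [hlent]; have := j.isLt; omega)]
          omega
      · have hfi : f i = dollar := (hf0 i).mpr hi0
        rw [hfi]
        by_cases hgj : g j = dollar
        · rw [hgj]
        · exact le_of_lt (hdollar _ hgj)
    · have hfi : f i ≠ dollar := fun h => by have := (hf0 i).mp h; omega
      have hp0 : (occPos Z1 false).getD i.val 0 =
          (occPos (blocksB l0 l1 csl) false).getD (i.val - 1) 0 + 2 := by
        rw [hoccf, List.getD_append_right _ _ _ _ (by simp; omega)]
        simp only [List.length_cons, List.length_nil]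
        rw [getD_map_add _ _ _ (by rw [hlenf]; have := i.isLt; omega)]
      rcases Nat.eq_zero_or_pos j.val with hj0 | hj0
      · apply iff_of_false
        · rw [hp0, hocct, hj0]
          rw [List.getD_append _ _ _ _ (by norm_num)]
          norm_num
        · have hgj : g j = dollar := (hg0 j).mpr hj0
          rw [hgj]
          exact fun h => absurd h (not_le_of_gt (hdollar _ hfi))
      · have hgj : g j ≠ dollar := fun h => by have := (hg0 j).mp h; omega
        have hp1 : (occPos Z1 true).getD j.val 0 =
            (occPos (blocksB l0 l1 csl) true).getD (j.val - 1) 0 + 2 := by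
          rw [hocct, List.getD_append_right _ _ _ _ (by simp; omega)]
          simp only [List.length_cons, List.length_nil]
          rw [getD_map_add _ _ _ (by rw [hlent]; have := j.isLt; omega)]
        rw [hp0, hp1, Nat.add_lt_add_iff_right]
        rw [KB l0 l1 csl (i.val - 1) (j.val - 1)
          (by rw [hcnt0]; have := i.isLt; omega)
          (by rw [hcnt1]; have := j.isLt; omega)]
        have hA0 : Asum l0 (f i) csl =
            (Finset.univ.filter (fun i' : Fin n0 => f i' ≠ dollar ∧ f i' < f i)).card := by
          unfold Asum
          rw [sum_filter_card f l0 hl0'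
            ((Finset.univ.erase dollar).filter (fun c => c < f i))
            (csl.filter (fun c => decide (c < f i)))
            (hcs_nd.filter _)
            (fun c => by
              simp only [List.mem_filter, Finset.mem_filter, Finset.mem_erase,
                decide_eq_true_eq, hcs_mem c, Finset.mem_univ, and_true, true_and]
              try tauto)]
          congr 1
          apply Finset.filter_congr
          intro x _
          simp [Finset.mem_filter, Finset.mem_erase]
        have hA1 : Asum l1 (g j) csl =
            (Finset.univ.filter (fun j' : Fin n1 => g j' ≠ dollar ∧ g j' < g j)).card := by
          unfold Asum
          rw [sum_filter_card g l1 hl1'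
            ((Finset.univ.erase dollar).filter (fun c => c < g j))
            (csl.filter (fun c => decide (c < g j)))
            (hcs_nd.filter _)
            (fun c => by
              simp only [List.mem_filter, Finset.mem_filter, Finset.mem_erase,
                decide_eq_true_eq, hcs_mem c, Finset.mem_univ, and_true, true_and]
              try tauto)]
          congr 1
          apply Finset.filter_congr
          intro x _
          simp [Finset.mem_filter, Finset.mem_erase]
        have hs0 := sandwich f dollar hfmono hf0 i hi0
        have hs1 := sandwich g dollar hgmono hg0 j hj0
        apply QL l0 l1 csl hcs_sorted (f i) (g j) _ _
          ((hcs_mem _).mpr hfi) ((hcs_mem _).mpr hgj)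
          (by rw [hA0]; exact hs0.1)
          (by rw [hA0, hl0' (f i)]; have := hs0.2; omega)
          (by rw [hA1]; exact hs1.1)
          (by rw [hA1, hl1' (g j)]; have := hs1.2; omega)
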